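/- For nonnegative integers n_1, n_2 and k ≤ n_1, the rational number C(n_1 + 1/2, k)·4^k is an integer, where C(n_1 + 1/2, k) denotes the generalized binomial coefficient (n_1 + 1/2)(n_1 − 1/2)···(n_1 + 1/2 − k + 1)/k!. Consequently, 4^{n_1}·P_{n_1,n_2}(x) has integer coefficients, where P_{n_1,n_2}(x) = Σ_{k=0}^{n_1} C(n_2 + 1/2, k)·C(n_1 + n_2 − k, n_2)·x^k. -/

import Mathlib

/-- Generalized binomial coefficient `C(α, k) = α(α−1)⋯(α−k+1)/k!` for rational `α`. -/
def gchoose (α : ℚ) (k : ℕ) : ℚ :=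
  (∏ i ∈ Finset.range k, (α - i)) / (Nat.factorial k)

lemma gchoose_zero (α : ℚ) : gchoose α 0 = 1 := by simp [gchoose]

lemma gchoose_succ (α : ℚ) (k : ℕ) :
    gchoose α (k+1) = gchoose α k * (α - k) / (k+1) := by
  have hk : ((Nat.factorial k : ℚ)) ≠ 0 := by exact_mod_cast Nat.factorial_ne_zero k
  have hk1 : ((k:ℚ)+1) ≠ 0 := by positivity
  unfold gchoose
  rw [Finset.prod_range_succ, Nat.factorial_succ, div_mul_eq_mul_div, div_div]
  push_cast
  ring

lemma gchoose_pascal (α : ℚ) (k : ℕ) :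
    gchoose α (k+1) = gchoose (α-1) (k+1) + gchoose (α-1) k := by
  have hk : ((Nat.factorial k : ℚ)) ≠ 0 := by exact_mod_cast Nat.factorial_ne_zero k
  have hk1 : ((k:ℚ)+1) ≠ 0 := by positivity
  unfold gchoose
  rw [Finset.prod_range_succ' (fun i => α - i), Finset.prod_range_succ,
    Nat.factorial_succ]
  have h : ∀ i : ℕ, α - 1 - (i:ℚ) = α - ((i:ℚ)+1) := by intro i; ring
  simp only [h]
  push_cast
  field_simp
  ring

lemma base_case (k : ℕ) :
    gchoose (-(1/2) : ℚ) k * 4 ^ k = (((-1)^k * Nat.centralBinom k : ℤ) : ℚ) := by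
  induction k with
  | zero => simp [gchoose, Nat.centralBinom]
  | succ k ih =>
    rw [gchoose_succ]
    have hk1 : ((k:ℚ)+1) ≠ 0 := by positivity
    have hrec : ((k+1 : ℕ) : ℚ) * (Nat.centralBinom (k+1) : ℚ)
        = 2 * (2 * k + 1) * (Nat.centralBinom k : ℚ) := by
      exact_mod_cast congrArg (Nat.cast : ℕ → ℚ) (Nat.succ_mul_centralBinom_succ k)
    push_cast at hrec ⊢
    have : gchoose (-(1/2) : ℚ) k * 4 ^ k = (-1)^k * (Nat.centralBinom k : ℚ) := by
      exact_mod_cast ih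
    rw [div_mul_eq_mul_div, div_eq_iff hk1]
    linear_combination (4*(-(1:ℚ)/2 - k)) * this + ((-1):ℚ)^k * hrec

lemma key (m k : ℕ) : ∃ z : ℤ, gchoose ((m:ℚ) - 1/2) k * 4 ^ k = (z : ℚ) := by
  induction m generalizing k with
  | zero =>
    refine ⟨(-1)^k * Nat.centralBinom k, ?_⟩
    have := base_case k
    norm_num at this ⊢
    convert this using 3 <;> norm_num
  | succ m ih =>
    cases k with
    | zero => exact ⟨1, by simp [gchoose_zero]⟩
    | succ k =>
      obtain ⟨z1, hz1⟩ := ih (k+1)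
      obtain ⟨z2, hz2⟩ := ih k
      refine ⟨z1 + 4 * z2, ?_⟩
      have h : ((m:ℚ)+1) - 1/2 - 1 = (m:ℚ) - 1/2 := by ring
      rw [show (((m+1 : ℕ)):ℚ) - 1/2 = ((m:ℚ)+1) - 1/2 by push_cast; ring,
        gchoose_pascal, h, add_mul, hz1]
      push_cast
      rw [pow_succ]
      nlinarith [hz2]

theorem gchoose_half_integrality (n1 n2 : ℕ) :
    (∀ k : ℕ, k ≤ n1 → ∃ z : ℤ, gchoose ((n1 : ℚ) + 1 / 2) k * 4 ^ k = (z : ℚ)) ∧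
    (∀ k : ℕ, k ≤ n1 → ∃ z : ℤ,
      (4 : ℚ) ^ n1 * (gchoose ((n2 : ℚ) + 1 / 2) k * (Nat.choose (n1 + n2 - k) n2 : ℚ))
        = (z : ℚ)) := by
  have main : ∀ n k : ℕ, ∃ z : ℤ, gchoose ((n : ℚ) + 1 / 2) k * 4 ^ k = (z : ℚ) := by
    intro n k
    obtain ⟨z, hz⟩ := key (n+1) k
    refine ⟨z, ?_⟩
    rw [show (n:ℚ) + 1/2 = ((n+1 : ℕ) : ℚ) - 1/2 by push_cast; ring]
    exact hz
  constructor
  · intro k _; exact main n1 k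
  · intro k hk
    obtain ⟨z, hz⟩ := main n2 k
    refine ⟨z * 4 ^ (n1 - k) * (Nat.choose (n1 + n2 - k) n2 : ℤ), ?_⟩
    have : (4:ℚ) ^ n1 = 4 ^ k * 4 ^ (n1 - k) := by
      rw [← pow_add, Nat.add_sub_cancel' hk]
    rw [this]
    push_cast
    linear_combination (4:ℚ)^(n1-k) * ((Nat.choose (n1 + n2 - k) n2 : ℚ)) * hz
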